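/- Let (ξ_n = (ξc_n, ξm_n))_{n≥1} be i.i.d. with law π, where E[ξc] ≤ 1, and let S^{(c)}_n = a + ξc_1 + ... + ξc_n − n be the associated downward-skip-free random walk started at a ≥ 1. Let ς(0) = inf{n ≥ 0 : S^{(c)}_n = 0} and Σ(0) = Σ_{i=1}^{ς(0)} ξm_i. Then (ς(0), Σ(0)) under P_a has the same distribution as (T0, M1), the total type-0 population and number of first-type mutants of the Galton-Watson process with neutral mutations started from a ancestors and reproduction law π. -/

import Mathlib

open scoped ENNReal
open MeasureTheory ProbabilityTheory

/-- `n`-fold convolution power of a law on `ℕ × ℕ`. -/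
noncomputable def convPow (π : PMF (ℕ × ℕ)) : ℕ → PMF (ℕ × ℕ)
  | 0 => PMF.pure (0, 0)
  | n + 1 => (convPow π n).bind fun s => π.map fun t => (s.1 + t.1, s.2 + t.2)

/-- `μ` is the joint law of `(T0, M1)` for the Galton-Watson process with neutral mutations,
one ancestor and offspring law `π`; under `a` ancestors the law is `convPow μ a`. -/
def branchingFixedPoint (π μ : PMF (ℕ × ℕ)) : Prop :=
  μ = π.bind fun kl => (convPow μ kl.1).map fun s => (1 + s.1, kl.2 + s.2)

open scoped Classical

namespace Stmt6Aux

noncomputable def conv (ρ σ : PMF (ℕ × ℕ)) : PMF (ℕ × ℕ) :=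
  ρ.bind fun s => σ.map fun t => (s.1 + t.1, s.2 + t.2)

lemma conv_def (ρ σ : PMF (ℕ × ℕ)) :
    conv ρ σ = ρ.bind fun s => σ.bind fun t => PMF.pure (s.1 + t.1, s.2 + t.2) := rfl

lemma convPow_succ (μ : PMF (ℕ × ℕ)) (n : ℕ) : convPow μ (n + 1) = conv (convPow μ n) μ := rfl

lemma conv_pure_right (ρ : PMF (ℕ × ℕ)) : conv ρ (PMF.pure (0, 0)) = ρ := by
  rw [conv_def]
  have h : ∀ s : ℕ × ℕ, ((PMF.pure ((0 : ℕ), (0 : ℕ))).bind fun t => PMF.pure (s.1 + t.1, s.2 + t.2)) = PMF.pure s := by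
    intro s; rw [PMF.pure_bind]; simp
  simp_rw [h]
  exact PMF.bind_pure ρ

lemma conv_pure_left (σ : PMF (ℕ × ℕ)) : conv (PMF.pure (0, 0)) σ = σ := by
  rw [conv_def, PMF.pure_bind]
  simp

lemma conv_assoc (p q r : PMF (ℕ × ℕ)) : conv (conv p q) r = conv p (conv q r) := by
  simp only [conv_def, PMF.bind_bind, PMF.pure_bind]
  simp [add_assoc]

lemma convPow_add (μ : PMF (ℕ × ℕ)) (x y : ℕ) :
    convPow μ (x + y) = conv (convPow μ x) (convPow μ y) := by
  induction y with
  | zero => rw [Nat.add_zero]; exact (conv_pure_right _).symm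
  | succ y ih =>
      rw [← Nat.add_assoc, convPow_succ, ih, convPow_succ, conv_assoc]

lemma convPow_one (μ : PMF (ℕ × ℕ)) : convPow μ 1 = μ := by
  rw [show (1 : ℕ) = 0 + 1 from rfl, convPow_succ]
  exact conv_pure_left μ

lemma conv_map_left (c1 c2 : ℕ) (σ ρ : PMF (ℕ × ℕ)) :
    conv (σ.map fun s => (c1 + s.1, c2 + s.2)) ρ =
      (conv σ ρ).map fun s => (c1 + s.1, c2 + s.2) := by
  rw [conv_def, PMF.bind_map, conv_def]
  rw [PMF.map_bind]
  refine congrArg _ (funext fun s => ?_)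
  rw [PMF.map_bind]
  refine congrArg _ (funext fun t => ?_)
  simp [Function.comp, PMF.pure_map, add_assoc]

lemma convPow_succ_eq (π μ : PMF (ℕ × ℕ)) (hb : branchingFixedPoint π μ) (b : ℕ) :
    convPow μ (b + 1) =
      π.bind fun kl => (convPow μ (kl.1 + b)).map fun s => (1 + s.1, kl.2 + s.2) := by
  have hb' : μ = π.bind fun kl => (convPow μ kl.1).map fun s => (1 + s.1, kl.2 + s.2) := hb
  rw [show b + 1 = 1 + b from Nat.add_comm b 1, convPow_add, convPow_one]
  set ρ := convPow μ b with hρ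
  conv_lhs => rw [hb']
  rw [conv_def, PMF.bind_bind]
  refine congrArg _ (funext fun kl => ?_)
  have h2 := conv_map_left 1 kl.2 (convPow μ kl.1) ρ
  rw [conv_def] at h2
  rw [h2, hρ, ← convPow_add]

lemma convPow_apply_succ (π μ : PMF (ℕ × ℕ)) (hb : branchingFixedPoint π μ) (b n m : ℕ) :
    convPow μ (b + 1) (n + 1, m) =
      ∑' kl : ℕ × ℕ, π kl * (if kl.2 ≤ m then convPow μ (kl.1 + b) (n, m - kl.2) else 0) := by
  rw [convPow_succ_eq π μ hb b, PMF.bind_apply]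
  refine tsum_congr fun kl => ?_
  congr 1
  rw [PMF.map_apply]
  by_cases h : kl.2 ≤ m
  · rw [if_pos h]
    rw [tsum_eq_single (n, m - kl.2)]
    · rw [if_pos]
      refine Prod.ext ?_ ?_ <;> simp <;> omega
    · intro s hs
      rw [if_neg]
      intro hEq
      apply hs
      obtain ⟨h1, h2⟩ := Prod.mk.injEq .. ▸ hEq
      refine Prod.ext ?_ ?_ <;> simp <;> omega
  · rw [if_neg h]
    refine (tsum_congr fun s => ?_).trans tsum_zero
    rw [if_neg]
    intro hEq
    obtain ⟨h1, h2⟩ := Prod.mk.injEq .. ▸ hEq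
    omega

lemma convPow_apply_zero (π μ : PMF (ℕ × ℕ)) (hb : branchingFixedPoint π μ) (b m : ℕ) :
    convPow μ (b + 1) (0, m) = 0 := by
  rw [convPow_succ_eq π μ hb b, PMF.bind_apply]
  have hz : ∀ kl : ℕ × ℕ,
      ((convPow μ (kl.1 + b)).map fun s => (1 + s.1, kl.2 + s.2)) (0, m) = 0 := by
    intro kl
    rw [PMF.map_apply]
    refine (tsum_congr fun s => ?_).trans tsum_zero
    rw [if_neg]
    intro hEq
    obtain ⟨h1, h2⟩ := Prod.mk.injEq .. ▸ hEq
    omega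
  simp only [hz, mul_zero, tsum_zero]

/-- The deterministic condition: first hitting of `0` by the walk from `a` at time exactly `n`,
with total marks `m`. -/
def cond (a n m : ℕ) (u : ℕ → ℕ × ℕ) : Prop :=
  ((a : ℤ) + ∑ i ∈ Finset.range n, ((u i).1 : ℤ) = (n : ℤ)) ∧
  (∀ j < n, (a : ℤ) + ∑ i ∈ Finset.range j, ((u i).1 : ℤ) ≠ (j : ℤ)) ∧
  ((∑ i ∈ Finset.range n, (u i).2) = m)

lemma cond_congr {a n m : ℕ} {u u' : ℕ → ℕ × ℕ} (h : ∀ i < n, u i = u' i) :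
    cond a n m u ↔ cond a n m u' := by
  have h1 : ∀ j ≤ n, (∑ i ∈ Finset.range j, ((u i).1 : ℤ)) = ∑ i ∈ Finset.range j, ((u' i).1 : ℤ) := by
    intro j hj
    refine Finset.sum_congr rfl fun i hi => ?_
    rw [h i (lt_of_lt_of_le (Finset.mem_range.1 hi) hj)]
  have h2 : (∑ i ∈ Finset.range n, (u i).2) = ∑ i ∈ Finset.range n, (u' i).2 := by
    refine Finset.sum_congr rfl fun i hi => ?_
    rw [h i (Finset.mem_range.1 hi)]
  unfold cond
  rw [h1 n le_rfl, h2]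
  refine and_congr_right fun _ => and_congr_left fun _ => ?_
  exact forall₂_congr fun j hj => by rw [h1 j hj.le]

lemma cond_iff (b n m : ℕ) (u : ℕ → ℕ × ℕ) :
    cond (b + 1) (n + 1) m u ↔
      ((u 0).2 ≤ m ∧ cond (b + (u 0).1) n (m - (u 0).2) (fun i => u (i + 1))) := by
  unfold cond
  rw [Finset.sum_range_succ' (fun i => ((u i).1 : ℤ)) n,
    Finset.sum_range_succ' (fun i => (u i).2) n]
  constructor
  · rintro ⟨h1, h2, h3⟩
    have hle : (u 0).2 ≤ m := le_trans (Nat.le_add_left _ _) h3.le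
    refine ⟨hle, ?_, ?_, Nat.eq_sub_of_add_eq h3⟩
    · push_cast at h1 ⊢; linarith
    · intro j hj
      have hh := h2 (j + 1) (by omega)
      rw [Finset.sum_range_succ' (fun i => ((u i).1 : ℤ)) j] at hh
      push_cast at hh ⊢
      intro hEq; exact hh (by linarith)
  · rintro ⟨hle, h1, h2, h3⟩
    refine ⟨?_, ?_, ?_⟩
    · push_cast at h1 ⊢; linarith
    · intro j hj
      match j with
      | 0 =>
          simp only [Finset.range_zero, Finset.sum_empty, add_zero]
          push_cast
          omega
      | j + 1 =>
          rw [Finset.sum_range_succ' (fun i => ((u i).1 : ℤ)) j]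
          have hh := h2 j (by omega)
          push_cast at hh ⊢
          intro hEq; exact hh (by linarith)
    · rw [h3]; exact Nat.sub_add_cancel hle

/-- Extend a finite tuple to a function on `ℕ` by zeros. -/
def pad (n : ℕ) (v : Fin n → ℕ × ℕ) : ℕ → ℕ × ℕ := fun i => if h : i < n then v ⟨i, h⟩ else (0, 0)

lemma pad_lt {n : ℕ} (v : Fin n → ℕ × ℕ) (i : ℕ) (h : i < n) : pad n v i = v ⟨i, h⟩ := dif_pos h

lemma comb (π μ : PMF (ℕ × ℕ)) (hb : branchingFixedPoint π μ) :
    ∀ n a m : ℕ,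
      (∑' v : Fin n → ℕ × ℕ, if cond a n m (pad n v) then ∏ i, π (v i) else 0) =
        convPow μ a (n, m)
  | 0, a, m => by
      rw [tsum_eq_single (fun _ : Fin 0 => ((0 : ℕ), (0 : ℕ)))
        (fun v hv => absurd (Subsingleton.elim v _) hv)]
      have hcond : cond a 0 m (pad 0 fun _ => ((0 : ℕ), (0 : ℕ))) ↔ (a = 0 ∧ m = 0) := by
        unfold cond
        simp only [Finset.range_zero, Finset.sum_empty, add_zero, Nat.cast_zero]
        constructor
        · rintro ⟨h1, _, h3⟩; exact ⟨by exact_mod_cast h1, h3.symm⟩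
        · rintro ⟨h1, h2⟩; subst h1; subst h2; exact ⟨rfl, by omega, rfl⟩
      rcases Nat.eq_zero_or_pos a with ha | ha
      · subst ha
        rw [show convPow μ 0 = PMF.pure ((0 : ℕ), (0 : ℕ)) from rfl, PMF.pure_apply]
        by_cases hm : m = 0
        · subst hm
          rw [if_pos (hcond.2 ⟨rfl, rfl⟩), if_pos rfl]
          simp
        · rw [if_neg (fun hc => hm (hcond.1 hc).2), if_neg (by simp [hm])]
      · obtain ⟨b, rfl⟩ : ∃ b, a = b + 1 := ⟨a - 1, by omega⟩
        rw [convPow_apply_zero π μ hb, if_neg]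
        intro hc; exact absurd (hcond.1 hc).1 (by omega)
  | n + 1, a, m => by
      rcases Nat.eq_zero_or_pos a with ha | ha
      · subst ha
        have hL : ∀ v : Fin (n + 1) → ℕ × ℕ,
            (if cond 0 (n + 1) m (pad (n + 1) v) then ∏ i, π (v i) else 0) = 0 := by
          intro v
          rw [if_neg]
          intro hc
          have h0 := hc.2.1 0 (Nat.succ_pos n)
          simp at h0
        rw [tsum_congr hL, tsum_zero,
          show convPow μ 0 = PMF.pure ((0 : ℕ), (0 : ℕ)) from rfl, PMF.pure_apply, if_neg (by simp)]
      · obtain ⟨b, rfl⟩ : ∃ b, a = b + 1 := ⟨a - 1, by omega⟩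
        rw [convPow_apply_succ π μ hb]
        rw [← Equiv.tsum_eq (Fin.consEquiv fun _ : Fin (n + 1) => ℕ × ℕ)
          (fun v => if cond (b + 1) (n + 1) m (pad (n + 1) v) then ∏ i, π (v i) else 0)]
        rw [ENNReal.tsum_prod']
        refine tsum_congr fun kl => ?_
        have hterm : ∀ v : Fin n → ℕ × ℕ,
            (if cond (b + 1) (n + 1) m
                (pad (n + 1) ((Fin.consEquiv fun _ : Fin (n + 1) => ℕ × ℕ) (kl, v)))
              then ∏ i, π ((Fin.consEquiv fun _ : Fin (n + 1) => ℕ × ℕ) (kl, v) i) else 0) =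
            π kl * (if kl.2 ≤ m
              then (if cond (b + kl.1) n (m - kl.2) (pad n v) then ∏ i, π (v i) else 0)
              else 0) := by
          intro v
          have hce : (Fin.consEquiv fun _ : Fin (n + 1) => ℕ × ℕ) (kl, v)
              = Fin.cons (α := fun _ : Fin (n + 1) => ℕ × ℕ) kl v := rfl
          rw [hce]
          have hpad0 :
              pad (n + 1) (Fin.cons (α := fun _ : Fin (n + 1) => ℕ × ℕ) kl v) 0 = kl := by
            rw [pad_lt _ 0 (Nat.succ_pos n)]
            exact Fin.cons_zero (α := fun _ : Fin (n + 1) => ℕ × ℕ) kl v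
          have hpadsucc : ∀ i < n,
              pad (n + 1) (Fin.cons (α := fun _ : Fin (n + 1) => ℕ × ℕ) kl v) (i + 1)
                = pad n v i := by
            intro i hi
            rw [pad_lt _ (i + 1) (by omega), pad_lt _ i hi]
            exact Fin.cons_succ (α := fun _ : Fin (n + 1) => ℕ × ℕ) kl v ⟨i, hi⟩
          have hcond : cond (b + 1) (n + 1) m
                (pad (n + 1) (Fin.cons (α := fun _ : Fin (n + 1) => ℕ × ℕ) kl v)) ↔
              (kl.2 ≤ m ∧ cond (b + kl.1) n (m - kl.2) (pad n v)) := by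
            rw [cond_iff, hpad0]
            exact and_congr_right fun _ => cond_congr hpadsucc
          have hprodc :
              (∏ i, π (Fin.cons (α := fun _ : Fin (n + 1) => ℕ × ℕ) kl v i))
                = π kl * ∏ i, π (v i) := by
            rw [Fin.prod_univ_succ]
            simp
          by_cases h1 : kl.2 ≤ m
          · by_cases h2 : cond (b + kl.1) n (m - kl.2) (pad n v)
            · rw [if_pos (hcond.2 ⟨h1, h2⟩), if_pos h1, if_pos h2, hprodc]
            · rw [if_neg (fun hc => h2 (hcond.1 hc).2), if_pos h1, if_neg h2, mul_zero]
          · rw [if_neg (fun hc => h1 (hcond.1 hc).1), if_neg h1, mul_zero]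
        rw [tsum_congr hterm, ENNReal.tsum_mul_left]
        congr 1
        by_cases h1 : kl.2 ≤ m
        · rw [if_pos h1, Nat.add_comm kl.1 b, ← comb π μ hb n (b + kl.1) (m - kl.2)]
          exact tsum_congr fun v => if_pos h1
        · rw [if_neg h1]
          exact (tsum_congr fun v => if_neg h1).trans tsum_zero

lemma bridge {Ω : Type*} [MeasurableSpace Ω] (P : Measure Ω) [IsProbabilityMeasure P]
    (π : PMF (ℕ × ℕ)) (ξ : ℕ → Ω → ℕ × ℕ) (hmeas : ∀ i, Measurable (ξ i))
    (hindep : iIndepFun ξ P)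
    (hdist : ∀ i, Measure.map (ξ i) P = π.toMeasure) (a n m : ℕ) :
    P {ω | cond a n m fun i => ξ i ω} =
      ∑' v : Fin n → ℕ × ℕ, if cond a n m (pad n v) then ∏ i, π (v i) else 0 := by
  have hsingle : ∀ (i : ℕ) (x : ℕ × ℕ), P (ξ i ⁻¹' {x}) = π x := by
    intro i x
    rw [← PMF.toMeasure_apply_singleton π x (measurableSet_singleton x), ← hdist i,
      Measure.map_apply (hmeas i) (measurableSet_singleton x)]
  set B : (Fin n → ℕ × ℕ) → Set Ω := fun v => ⋂ i ∈ Finset.range n, ξ i ⁻¹' {pad n v i} with hB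
  have hBmeas : ∀ v, MeasurableSet (B v) := fun v =>
    (Finset.range n).measurableSet_biInter fun i _ => (hmeas i) (measurableSet_singleton _)
  have hBmem : ∀ v ω, ω ∈ B v ↔ ∀ i < n, ξ i ω = pad n v i := by
    intro v ω
    simp only [hB, Set.mem_iInter, Set.mem_preimage, Set.mem_singleton_iff, Finset.mem_range]
  have hset : {ω | cond a n m fun i => ξ i ω} =
      ⋃ v : Fin n → ℕ × ℕ, if cond a n m (pad n v) then B v else ∅ := by
    ext ω
    simp only [Set.mem_setOf_eq, Set.mem_iUnion]
    constructor
    · intro h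
      refine ⟨fun i => ξ i ω, ?_⟩
      have hagree : ∀ i < n, ξ i ω = pad n (fun i : Fin n => ξ i ω) i := by
        intro i hi
        rw [pad_lt _ i hi]
      rw [if_pos ((cond_congr hagree).1 h)]
      exact (hBmem _ ω).2 hagree
    · rintro ⟨v, hv⟩
      by_cases hc : cond a n m (pad n v)
      · rw [if_pos hc] at hv
        exact (cond_congr fun i hi => ((hBmem v ω).1 hv i hi)).2 hc
      · rw [if_neg hc] at hv
        exact absurd hv (Set.notMem_empty ω)
  rw [hset, measure_iUnion]
  · refine tsum_congr fun v => ?_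
    by_cases hc : cond a n m (pad n v)
    · rw [if_pos hc, if_pos hc, hB]
      rw [hindep.measure_inter_preimage_eq_mul (Finset.range n)
        (sets := fun i => {pad n v i}) (fun i _ => measurableSet_singleton _)]
      rw [Finset.prod_congr rfl fun i _ => hsingle i _]
      rw [← Fin.prod_univ_eq_prod_range (fun i => π (pad n v i)) n]
      exact Finset.prod_congr rfl fun i _ => by rw [pad_lt _ _ i.isLt]
    · rw [if_neg hc, if_neg hc, measure_empty]
  · intro v v' hne
    show Disjoint (if cond a n m (pad n v) then B v else ∅)
      (if cond a n m (pad n v') then B v' else ∅)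
    by_cases hc : cond a n m (pad n v)
    · by_cases hc' : cond a n m (pad n v')
      · rw [if_pos hc, if_pos hc']
        refine Set.disjoint_left.2 fun ω h1 h2 => hne (funext fun i => ?_)
        have e1 := (hBmem v ω).1 h1 i i.isLt
        have e2 := (hBmem v' ω).1 h2 i i.isLt
        rw [pad_lt _ _ i.isLt] at e1 e2
        rw [show (⟨(i : ℕ), i.isLt⟩ : Fin n) = i from rfl] at e1 e2
        rw [← e1, ← e2]
      · rw [if_neg hc']
        exact Set.disjoint_empty _
    · rw [if_neg hc]
      exact Set.empty_disjoint _
  · intro v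
    by_cases hc : cond a n m (pad n v)
    · rw [if_pos hc]; exact hBmeas v
    · rw [if_neg hc]; exact MeasurableSet.empty

end Stmt6Aux

open Stmt6Aux in
/-- for the downward-skip-free walk `S n = a + ξc₁ + ⋯ + ξcₙ - n` built from
i.i.d. pairs `(ξc, ξm)` with law `π` (with `E[ξc] ≤ 1`), the pair `(ς(0), Σ(0))` — first
hitting time of `0` and the sum of the marks `ξm` up to that time — has the same law as
`(T0, M1)` under `P_a`. -/
theorem stmt6 {Ω : Type*} [MeasurableSpace Ω] (P : Measure Ω) [IsProbabilityMeasure P]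
    (π μ : PMF (ℕ × ℕ))
    (hb : branchingFixedPoint π μ)
    (hsub : ∑' kl : ℕ × ℕ, π kl * (kl.1 : ℝ≥0∞) ≤ 1)
    (ξ : ℕ → Ω → ℕ × ℕ)
    (hmeas : ∀ i, Measurable (ξ i))
    (hindep : iIndepFun ξ P)
    (hdist : ∀ i, Measure.map (ξ i) P = π.toMeasure)
    (a : ℕ) (ha : 1 ≤ a)
    (S : ℕ → Ω → ℤ)
    (hS : ∀ n ω, S n ω = (a : ℤ) + (∑ i ∈ Finset.range n, ((ξ i ω).1 : ℤ)) - n)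
    (ς : Ω → ℕ) (hς : ∀ ω, ς ω = sInf {n : ℕ | S n ω = 0})
    (Sig0 : Ω → ℕ) (hSig : ∀ ω, Sig0 ω = ∑ i ∈ Finset.range (ς ω), (ξ i ω).2) :
    Measure.map (fun ω => (ς ω, Sig0 ω)) P = (convPow μ a).toMeasure := by
  classical
  obtain ⟨b, rfl⟩ : ∃ b, a = b + 1 := ⟨a - 1, by omega⟩
  have hSm : ∀ j, Measurable (S j) := by
    intro j
    have hfun : S j = fun ω =>
        ((b + 1 : ℕ) : ℤ) + (∑ i ∈ Finset.range j, ((ξ i ω).1 : ℤ)) - (j : ℤ) :=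
      funext fun ω => hS j ω
    rw [hfun]
    exact (measurable_const.add (Finset.measurable_sum _ fun i _ =>
      (measurable_of_countable fun k : ℕ × ℕ => ((k.1 : ℤ))).comp (hmeas i))).sub
      measurable_const
  have hA : ∀ n ω, ς ω = n + 1 ↔ (S (n + 1) ω = 0 ∧ ∀ j < n + 1, S j ω ≠ 0) := by
    intro n ω
    rw [hς ω]
    constructor
    · intro h
      have hne : {k : ℕ | S k ω = 0}.Nonempty := by
        by_contra hcon
        rw [Set.not_nonempty_iff_eq_empty] at hcon
        rw [hcon, Nat.sInf_empty] at h
        omega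
      have hmem : S (n + 1) ω = 0 := by
        have := Nat.sInf_mem hne
        rwa [h] at this
      refine ⟨hmem, fun j hj hje => ?_⟩
      have hle := Nat.sInf_le (show j ∈ {k : ℕ | S k ω = 0} from hje)
      omega
    · rintro ⟨h1, h2⟩
      refine le_antisymm (Nat.sInf_le h1) (le_csInf ⟨n + 1, h1⟩ fun k hk => ?_)
      by_contra hlt
      push_neg at hlt
      exact h2 k (by omega) hk
  have hpreM : ∀ n, MeasurableSet (ς ⁻¹' {n + 1}) := by
    intro n
    have hpre : ς ⁻¹' {n + 1} =
        (S (n + 1) ⁻¹' {0}) ∩ ⋂ j, ⋂ _ : j < n + 1, (S j ⁻¹' {0})ᶜ := by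
      ext ω
      simp only [Set.mem_preimage, Set.mem_singleton_iff, Set.mem_inter_iff, Set.mem_iInter,
        Set.mem_compl_iff]
      exact hA n ω
    rw [hpre]
    exact ((hSm (n + 1)) (measurableSet_singleton 0)).inter
      (MeasurableSet.iInter fun j => MeasurableSet.iInter fun _ =>
        ((hSm j) (measurableSet_singleton 0)).compl)
  have hςm : Measurable ς := by
    apply measurable_to_countable'
    intro x
    cases x with
    | succ n => exact hpreM n
    | zero =>
        have h0 : ς ⁻¹' {0} = (⋃ n, ς ⁻¹' {n + 1})ᶜ := by
          ext ω
          simp only [Set.mem_preimage, Set.mem_singleton_iff, Set.mem_compl_iff, Set.mem_iUnion]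
          constructor
          · rintro h ⟨n, hn⟩; omega
          · intro h
            by_contra hc
            exact h ⟨ς ω - 1, by omega⟩
        rw [h0]
        exact (MeasurableSet.iUnion fun n => hpreM n).compl
  have hSigm : Measurable Sig0 := by
    apply measurable_to_countable'
    intro x
    have hx : Sig0 ⁻¹' {x} =
        ⋃ n, ς ⁻¹' {n} ∩ (fun ω => ∑ i ∈ Finset.range n, (ξ i ω).2) ⁻¹' {x} := by
      ext ω
      simp only [Set.mem_preimage, Set.mem_singleton_iff, Set.mem_iUnion, Set.mem_inter_iff]
      constructor
      · intro h; exact ⟨ς ω, rfl, by rw [← h, hSig ω]⟩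
      · rintro ⟨n, h1, h2⟩; rw [hSig ω, h1]; exact h2
    rw [hx]
    exact MeasurableSet.iUnion fun n => (hςm (measurableSet_singleton n)).inter
      ((Finset.measurable_sum _ fun i _ =>
        (measurable_of_countable fun k : ℕ × ℕ => k.2).comp (hmeas i))
        (measurableSet_singleton x))
  have hev : ∀ n m ω, (ς ω = n + 1 ∧ Sig0 ω = m) ↔
      cond (b + 1) (n + 1) m (fun i => ξ i ω) := by
    intro n m ω
    have hSzero : ∀ j, (S j ω = 0) ↔
        (((b + 1 : ℕ) : ℤ) + ∑ i ∈ Finset.range j, ((ξ i ω).1 : ℤ) = (j : ℤ)) := by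
      intro j
      rw [hS j ω]
      constructor <;> intro h <;> linarith
    constructor
    · rintro ⟨h1, h2⟩
      obtain ⟨hz, hne⟩ := (hA n ω).1 h1
      refine ⟨(hSzero (n + 1)).1 hz, ?_, ?_⟩
      · intro j hj hEq
        exact hne j hj ((hSzero j).2 hEq)
      · rw [hSig ω, h1] at h2; exact h2
    · rintro ⟨c1, c2, c3⟩
      have h1 : ς ω = n + 1 := (hA n ω).2 ⟨(hSzero (n + 1)).2 c1,
        fun j hj hzz => c2 j hj ((hSzero j).1 hzz)⟩
      exact ⟨h1, by rw [hSig ω, h1]; exact c3⟩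
  have hmain : ∀ n m : ℕ, P {ω | ς ω = n + 1 ∧ Sig0 ω = m} = convPow μ (b + 1) (n + 1, m) := by
    intro n m
    have hsetEq : {ω | ς ω = n + 1 ∧ Sig0 ω = m} =
        {ω | cond (b + 1) (n + 1) m fun i => ξ i ω} := Set.ext fun ω => hev n m ω
    rw [hsetEq, bridge P π ξ hmeas hindep hdist (b + 1) (n + 1) m,
      comb π μ hb (n + 1) (b + 1) m]
  have hevM : ∀ n m : ℕ, MeasurableSet {ω | ς ω = n + 1 ∧ Sig0 ω = m} := by
    intro n m
    have : {ω | ς ω = n + 1 ∧ Sig0 ω = m} = ς ⁻¹' {n + 1} ∩ Sig0 ⁻¹' {m} := rfl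
    rw [this]
    exact (hpreM n).inter (hSigm (measurableSet_singleton m))
  have hς0 : P (ς ⁻¹' {0}) = 0 := by
    have hUc : ς ⁻¹' {0} = (⋃ n, ς ⁻¹' {n + 1})ᶜ := by
      ext ω
      simp only [Set.mem_preimage, Set.mem_singleton_iff, Set.mem_compl_iff, Set.mem_iUnion]
      constructor
      · rintro h ⟨n, hn⟩; omega
      · intro h
        by_contra hc
        exact h ⟨ς ω - 1, by omega⟩
    have hsplit : ∀ n : ℕ, P (ς ⁻¹' {n + 1}) = ∑' m, convPow μ (b + 1) (n + 1, m) := by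
      intro n
      have hu : ς ⁻¹' {n + 1} = ⋃ m, {ω | ς ω = n + 1 ∧ Sig0 ω = m} := by
        ext ω
        simp only [Set.mem_preimage, Set.mem_singleton_iff, Set.mem_iUnion, Set.mem_setOf_eq]
        constructor
        · intro h; exact ⟨Sig0 ω, h, rfl⟩
        · rintro ⟨m', h, _⟩; exact h
      rw [hu, measure_iUnion ?_ fun m => hevM n m]
      · exact tsum_congr fun m => hmain n m
      · intro m m' hne
        show Disjoint {ω | ς ω = n + 1 ∧ Sig0 ω = m} {ω | ς ω = n + 1 ∧ Sig0 ω = m'}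
        refine Set.disjoint_left.2 fun ω h1 h2 => hne ?_
        rw [← h1.2, ← h2.2]
    have hPU : P (⋃ n, ς ⁻¹' {n + 1}) = 1 := by
      rw [measure_iUnion ?_ fun n => hpreM n]
      · have h1 : (1 : ℝ≥0∞) = ∑' p : ℕ × ℕ, convPow μ (b + 1) p := (PMF.tsum_coe _).symm
        rw [ENNReal.tsum_prod'] at h1
        rw [tsum_eq_zero_add' ENNReal.summable] at h1
        have h0 : (∑' m : ℕ, convPow μ (b + 1) (0, m)) = 0 :=
          (tsum_congr fun m => convPow_apply_zero π μ hb b m).trans tsum_zero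
        rw [h0, zero_add] at h1
        rw [tsum_congr hsplit]
        exact h1.symm
      · intro n n' hne
        show Disjoint (ς ⁻¹' {n + 1}) (ς ⁻¹' {n' + 1})
        refine Set.disjoint_left.2 fun ω h1 h2 => hne ?_
        simp only [Set.mem_preimage, Set.mem_singleton_iff] at h1 h2
        omega
    rw [hUc, measure_compl (MeasurableSet.iUnion fun n => hpreM n) (measure_ne_top P _),
      measure_univ, hPU, tsub_self]
  rw [Measure.ext_iff_singleton]
  rintro ⟨n, m⟩
  rw [Measure.map_apply (hςm.prodMk hSigm) (measurableSet_singleton (n, m)),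
    PMF.toMeasure_apply_singleton _ (n, m) (measurableSet_singleton (n, m))]
  have hpre2 : (fun ω => (ς ω, Sig0 ω)) ⁻¹' {(n, m)} = {ω | ς ω = n ∧ Sig0 ω = m} := by
    ext ω
    simp [Prod.ext_iff]
  rw [hpre2]
  cases n with
  | succ n => exact hmain n m
  | zero =>
      rw [convPow_apply_zero π μ hb b m]
      refine le_antisymm ?_ (zero_le')
      calc P {ω | ς ω = 0 ∧ Sig0 ω = m} ≤ P (ς ⁻¹' {0}) := measure_mono fun ω h => h.1
      _ = 0 := hς0
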